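/- arXiv:1506.02713 — 4 statements merged into one kernel-verified Lean document; each statement's English description precedes it below -/
import Mathlib

section
/- For q a prime power and d ≥ n ≥ 1, m ≥ 1, the quantities P(d) = q^{dm} − q^{(d−n)m+1} (for d > n, with P(j) = q^{jm} for 0 ≤ j < n and P(n) = q^{nm} − q) satisfy the recursion P(d) = q^{dm} − Σ_{k≥1} P(d−kn)·q^k, where the sum runs over k with d − kn ≥ 0. -/
theorem stmt_3 (q m n d : ℕ) (hq : ∃ p k : ℕ, p.Prime ∧ q = p ^ k ∧ 1 ≤ k)
    (hn : 1 ≤ n) (hm : 1 ≤ m) (hd : n < d)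
    (P : ℕ → ℤ)
    (hP : ∀ j : ℕ, P j = if j < n then (q : ℤ) ^ (j * m)
      else (q : ℤ) ^ (j * m) - (q : ℤ) ^ ((j - n) * m + 1)) :
    P d = (q : ℤ) ^ (d * m) - ∑ k ∈ Finset.Icc 1 (d / n), P (d - k * n) * (q : ℤ) ^ k := by
  have hn0 : 0 < n := hn
  set K := d / n with hK
  have hK1 : 1 ≤ K := (Nat.one_le_div_iff hn0).mpr hd.le
  have hKd : K * n ≤ d := Nat.div_mul_le_self d n
  have hmod := Nat.div_add_mod d n
  have hmlt : d % n < n := Nat.mod_lt d hn0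
  have hKd2 : d < K * n + n := by
    have : n * K + d % n = d := hmod
    nlinarith [this, hmlt]
  set G : ℕ → ℤ := fun i => if i < K then (q:ℤ) ^ ((d - (i+1)*n)*m + (i+1)) else 0 with hG
  have hfin : ∑ k ∈ Finset.Icc 1 K, P (d - k * n) * (q:ℤ) ^ k
      = (q:ℤ) ^ ((d - n) * m + 1) := by
    have hsum : ∑ k ∈ Finset.Icc 1 K, P (d - k * n) * (q:ℤ) ^ k
        = ∑ i ∈ Finset.range K, P (d - (1 + i) * n) * (q:ℤ) ^ (1 + i) := by
      rw [← Finset.Ico_add_one_right_eq_Icc, Finset.sum_Ico_eq_sum_range]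
      simp
    rw [hsum]
    have key : ∀ i ∈ Finset.range K, P (d - (1+i)*n) * (q:ℤ)^(1+i) = G i - G (i+1) := by
      intro i hi
      simp only [Finset.mem_range] at hi
      rw [Nat.add_comm 1 i]
      by_cases h : i + 1 < K
      · -- i + 1 < K
        have h2 : (i+2) * n ≤ d :=
          le_trans (Nat.mul_le_mul_right n (by omega : i + 2 ≤ K)) hKd
        have hA : n ≤ d - (i+1)*n := by
          have e : (i+2)*n = (i+1)*n + n := by ring
          rw [e] at h2
          omega
        have hPj := hP (d - (i+1)*n)
        rw [if_neg (by omega : ¬ (d - (i+1)*n < n))] at hPj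
        rw [hPj]
        have hsub : d - (i+1)*n - n = d - (i+2)*n := by
          have e : (i+2)*n = (i+1)*n + n := by ring
          omega
        rw [hsub]
        have hGi : G i = (q:ℤ) ^ ((d - (i+1)*n)*m + (i+1)) := by
          simp only [hG]
          rw [if_pos hi]
        have hGi1 : G (i+1) = (q:ℤ) ^ ((d - (i+2)*n)*m + (i+2)) := by
          simp only [hG]
          rw [if_pos h]
        rw [hGi, hGi1, sub_mul, ← pow_add, ← pow_add]
        congr 2
        omega
      · -- i + 1 = K
        have hKe : i + 1 = K := by omega
        have hlt : d - (i+1)*n < n := by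
          have e : (i+1)*n = K * n := by rw [hKe]
          omega
        have hPj := hP (d - (i+1)*n)
        rw [if_pos hlt] at hPj
        rw [hPj]
        have hGi : G i = (q:ℤ) ^ ((d - (i+1)*n)*m + (i+1)) := by
          simp only [hG]
          rw [if_pos hi]
        have hGi1 : G (i+1) = 0 := by
          simp only [hG]
          rw [if_neg h]
        rw [hGi, hGi1, ← pow_add, sub_zero]
    rw [Finset.sum_congr rfl key, Finset.sum_range_sub' G]
    have hG0 : G 0 = (q:ℤ) ^ ((d - n)*m + 1) := by
      simp only [hG]
      rw [if_pos (by omega : (0:ℕ) < K)]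
      norm_num
    have hGK : G K = 0 := by
      simp only [hG]
      rw [if_neg (lt_irrefl K)]
    rw [hG0, hGK, sub_zero]
  rw [hfin, hP d, if_neg (by omega)]
end

section
/- For a finite field F_q and d ≥ n+1 ≥ 2, |Rat*_{d,n}(F_q)| = |Poly_{n+1}^{d(n+1),1}(F_q)|; that is, the number of (n+1)-tuples of monic degree-d polynomials over F_q with no common root in F_q-bar equals the number of monic polynomials of degree d(n+1) over F_q with no root of multiplicity ≥ n+1. -/
open Polynomial

noncomputable local instance myGCD (F : Type) [Field F] : StrongNormalizedGCDMonoid (Polynomial F) :=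
  letI := Classical.decEq F; inferInstance

namespace Stmt6Aux

variable {F : Type} [Field F]

/-- Make a nonzero polynomial monic by scaling. -/
noncomputable def mz (h : F[X]) : F[X] := h * C (h.leadingCoeff)⁻¹

lemma mz_monic {h : F[X]} (h0 : h ≠ 0) : (mz h).Monic :=
  monic_mul_leadingCoeff_inv h0

lemma mz_associated {h : F[X]} (h0 : h ≠ 0) : Associated h (mz h) :=
  associated_mul_unit_right h _ (isUnit_C.2 (isUnit_iff_ne_zero.2
    (inv_ne_zero (mt leadingCoeff_eq_zero.1 h0))))

lemma mz_eq_of_associated {h g : F[X]} (hg : g.Monic) (ha : Associated h g) : mz h = g := by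
  have h0 : h ≠ 0 := by
    rintro rfl
    exact hg.ne_zero ((associated_zero_iff_eq_zero g).1 ha.symm)
  exact eq_of_monic_of_associated (mz_monic h0) hg ((mz_associated h0).symm.trans ha)

/-- monic polys of degree e -/
abbrev Mo (F : Type) [Field F] (e : ℕ) := {p : F[X] // p.Monic ∧ p.natDegree = e}

/-- coprime tuples, all monic of degree m -/
abbrev Cop (F : Type) [Field F] (n m : ℕ) :=
  {f : Fin (n + 1) → F[X] // (∀ i, (f i).Monic ∧ (f i).natDegree = m) ∧
    Finset.univ.gcd f = 1}

/-- (n+1)-power-free monic polys of degree D -/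
abbrev PF (F : Type) [Field F] (n D : ℕ) :=
  {f : F[X] // f.Monic ∧ f.natDegree = D ∧
    ∀ p : F[X], Irreducible p → ¬ p ^ (n + 1) ∣ f}

instance instFinMo [Fintype F] (e : ℕ) : Finite (Mo F e) :=
  Finite.of_equiv _ ((monicEquivDegreeLT e).trans (degreeLTEquiv F e).toEquiv).symm

instance instFinCop [Fintype F] (n m : ℕ) : Finite (Cop F n m) := by
  apply Finite.of_injective
    (fun f : Cop F n m => fun i : Fin (n+1) => (⟨f.1 i, f.2.1 i⟩ : Mo F m))
  intro f g h
  apply Subtype.ext; funext i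
  exact congrArg (fun x : Mo F m => x.1) (congrFun h i)

instance instFinPF [Fintype F] (n D : ℕ) : Finite (PF F n D) := by
  apply Finite.of_injective (fun f : PF F n D => (⟨f.1, f.2.1, f.2.2.1⟩ : Mo F D))
  intro f g h
  apply Subtype.ext
  exact congrArg (fun x : Mo F D => x.1) h

lemma card_Mo [Fintype F] (e : ℕ) : Nat.card (Mo F e) = Fintype.card F ^ e := by
  rw [Nat.card_congr ((monicEquivDegreeLT e).trans (degreeLTEquiv F e).toEquiv)]
  simp [Nat.card_eq_fintype_card]

lemma ncard_sigma {m : ℕ} (β : Fin m → Type) [∀ i, Finite (β i)] :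
    Nat.card (Σ i, β i) = ∑ i, Nat.card (β i) := by
  have := fun i => Fintype.ofFinite (β i)
  simp [Nat.card_eq_fintype_card]

section GcdSide

variable {n : ℕ}

lemma gcd_mul_eq {n : ℕ} (g : F[X]) (c : Fin (n+1) → F[X])
    (hc : Finset.univ.gcd c = 1) :
    Finset.univ.gcd (fun i => g * c i) = normalize g := by
  rw [Finset.gcd_mul_left, hc, mul_one]

/-- The gcd-decomposition map is a bijection. -/
noncomputable def equivA (n d : ℕ) :
    (Σ e : Fin (d + 1), Mo F e × Cop F n (d - (e : ℕ))) ≃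
      {f : Fin (n + 1) → F[X] // ∀ i, (f i).Monic ∧ (f i).natDegree = d} := by
  refine Equiv.ofBijective (fun x =>
    ⟨fun i => x.2.1.1 * x.2.2.1 i, fun i => ?_⟩) ⟨?_, ?_⟩
  · obtain ⟨e, ⟨g, hg, hge⟩, ⟨c, hc, hc1⟩⟩ := x
    refine ⟨hg.mul (hc i).1, ?_⟩
    rw [hg.natDegree_mul (hc i).1, hge, (hc i).2]
    have : (e : ℕ) ≤ d := by omega
    omega
  · rintro ⟨e1, ⟨g1, hg1, hge1⟩, ⟨c1, hc1, hc11⟩⟩ ⟨e2, ⟨g2, hg2, hge2⟩, ⟨c2, hc2, hc21⟩⟩ h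
    have hfun : (fun i => g1 * c1 i) = fun i => g2 * c2 i :=
      congrArg Subtype.val h
    have hg : g1 = g2 := by
      have a1 : mz (Finset.univ.gcd fun i => g1 * c1 i) = g1 :=
        mz_eq_of_associated hg1 (by rw [gcd_mul_eq g1 c1 hc11]; exact (associated_normalize g1).symm)
      have a2 : mz (Finset.univ.gcd fun i => g2 * c2 i) = g2 :=
        mz_eq_of_associated hg2 (by rw [gcd_mul_eq g2 c2 hc21]; exact (associated_normalize g2).symm)
      rw [← a1, ← a2, hfun]
    have hcc : c1 = c2 := by
      funext i
      exact mul_left_cancel₀ hg1.ne_zero (by rw [hg] at hfun ⊢; exact congrFun hfun i)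
    have he : e1 = e2 := Fin.ext (by rw [← hge1, ← hge2, hg])
    subst he hg hcc
    rfl
  · rintro ⟨f, hf⟩
    set g0 := Finset.univ.gcd f with hg0def
    have hdvd0 : ∀ i, g0 ∣ f i := fun i => Finset.gcd_dvd (Finset.mem_univ i)
    have hfne : ∀ i, f i ≠ 0 := fun i => (hf i).1.ne_zero
    have hg0ne : g0 ≠ 0 := by
      intro h0
      exact hfne 0 ((Finset.gcd_eq_zero_iff.1 h0) 0 (Finset.mem_univ 0))
    set g := mz g0 with hgdef
    have hassoc : Associated g0 g := mz_associated hg0ne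
    have hgm : g.Monic := mz_monic hg0ne
    have hdvd : ∀ i, g ∣ f i := fun i => hassoc.symm.dvd.trans (hdvd0 i)
    have hge : g.natDegree ≤ d := by
      rw [← (hf 0).2]; exact natDegree_le_of_dvd (hdvd 0) (hfne 0)
    choose c hmul using hdvd
    have hcm : ∀ i, (c i).Monic := fun i =>
      hgm.of_mul_monic_left (by rw [← hmul i]; exact (hf i).1)
    have hcd : ∀ i, (c i).natDegree = d - g.natDegree := by
      intro i
      have := hgm.natDegree_mul (hcm i)
      rw [← hmul i, (hf i).2] at this
      omega
    have hc1 : Finset.univ.gcd c = 1 := by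
      have hfeq : f = fun i => g * c i := funext fun i => hmul i
      have h2 : g0 = normalize g * Finset.univ.gcd c := by
        rw [hg0def]
        conv_lhs => rw [hfeq]
        rw [Finset.gcd_mul_left]
      have hassoc2 : Associated g0 (normalize g) :=
        hassoc.trans (associated_normalize g)
      obtain ⟨u, hu⟩ := hassoc2
      have h3 : g0 * 1 = g0 * ((u : F[X]) * Finset.univ.gcd c) := by
        rw [mul_one, ← mul_assoc, hu]; exact h2
      have h4 : (1 : F[X]) = ↑u * Finset.univ.gcd c := mul_left_cancel₀ hg0ne h3
      have hGu : IsUnit (Finset.univ.gcd c) :=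
        IsUnit.of_mul_eq_one _ (by rw [mul_comm]; exact h4.symm)
      calc Finset.univ.gcd c = normalize (Finset.univ.gcd c) := Finset.normalize_gcd.symm
        _ = 1 := normalize_eq_one.2 hGu
    refine ⟨⟨⟨g.natDegree, by omega⟩, ⟨g, hgm, rfl⟩, ⟨c, fun i => ⟨hcm i, hcd i⟩, hc1⟩⟩, ?_⟩
    exact Subtype.ext (funext fun i => (hmul i).symm)

end GcdSide

section PowSide

/-- (n+1)-power-free predicate -/
def PFree (n : ℕ) (b : F[X]) : Prop := ∀ p : F[X], Irreducible p → ¬ p ^ (n + 1) ∣ b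

lemma monic_natDegree_pos {h : F[X]} (hm : h.Monic) (hne : h ≠ 1) : 0 < h.natDegree := by
  rcases Nat.eq_zero_or_pos h.natDegree with h0 | h0
  · exact absurd (hm.natDegree_eq_zero.1 h0) hne
  · exact h0

lemma pfree_one (n : ℕ) : PFree n (1 : F[X]) := by
  intro p hp hdvd
  exact hp.not_isUnit (isUnit_of_dvd_one (dvd_trans (dvd_pow_self p (Nat.succ_ne_zero n)) hdvd))

lemma exists_decomp (n : ℕ) : ∀ (k : ℕ) (f : F[X]), f.natDegree ≤ k → f.Monic →
    ∃ b h : F[X], b.Monic ∧ h.Monic ∧ PFree n b ∧ f = b * h ^ (n + 1) := by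
  intro k
  induction k with
  | zero =>
    intro f hdeg hm
    have : f = 1 := hm.natDegree_eq_zero.1 (Nat.le_zero.1 hdeg)
    exact ⟨f, 1, hm, monic_one, this ▸ pfree_one n, by simp⟩
  | succ k ih =>
    intro f hdeg hm
    by_cases hp : PFree n f
    · exact ⟨f, 1, hm, monic_one, hp, by simp⟩
    · simp only [PFree, not_forall, not_not] at hp
      obtain ⟨p, hpirr, hpd⟩ := hp
      have hp0 : p ≠ 0 := hpirr.ne_zero
      set q := mz p with hq
      have hassoc : Associated p q := mz_associated hp0
      have hqm : q.Monic := mz_monic hp0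
      have hqirr : Irreducible q := hassoc.irreducible hpirr
      have hqd : q ^ (n + 1) ∣ f := (Associated.pow_pow hassoc).symm.dvd.trans hpd
      obtain ⟨f', hf'⟩ := hqd
      have hf'm : f'.Monic := (hqm.pow (n+1)).of_mul_monic_left (hf' ▸ hm)
      have hqdeg : 0 < q.natDegree :=
        monic_natDegree_pos hqm (fun h1 => hqirr.not_isUnit (h1 ▸ isUnit_one))
      have hdeg' : f'.natDegree ≤ k := by
        have := (hqm.pow (n+1)).natDegree_mul hf'm
        rw [← hf', natDegree_pow] at this
        have h1 : 1 ≤ (n+1) * q.natDegree := Nat.mul_pos (Nat.succ_pos n) hqdeg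
        omega
      obtain ⟨b, h, hbm, hhm, hbp, hbh⟩ := ih f' hdeg' hf'm
      refine ⟨b, q * h, hbm, hqm.mul hhm, hbp, ?_⟩
      rw [hf', hbh, mul_pow]; ring

lemma eq_one_of_pfree {n : ℕ} {b1 b2 h2 : F[X]} (hb1 : PFree n b1) (hm2 : h2.Monic)
    (heq : b1 = b2 * h2 ^ (n + 1)) : h2 = 1 := by
  by_contra hne
  have h2nu : ¬ IsUnit h2 := fun hu =>
    hne (hm2.natDegree_eq_zero.1 (natDegree_eq_zero_of_isUnit hu))
  obtain ⟨p, hpirr, hpd⟩ := WfDvdMonoid.exists_irreducible_factor h2nu hm2.ne_zero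
  exact hb1 p hpirr (heq ▸ Dvd.dvd.mul_left (pow_dvd_pow_of_dvd hpd _) b2)

lemma decomp_unique (n : ℕ) : ∀ (k : ℕ) (b1 h1 b2 h2 : F[X]), h1.natDegree ≤ k →
    b1.Monic → h1.Monic → b2.Monic → h2.Monic → PFree n b1 → PFree n b2 →
    b1 * h1 ^ (n + 1) = b2 * h2 ^ (n + 1) → b1 = b2 ∧ h1 = h2 := by
  intro k
  induction k with
  | zero =>
    intro b1 h1 b2 h2 hdeg hb1 hh1 hb2 hh2 hp1 hp2 heq
    have h1e : h1 = 1 := hh1.natDegree_eq_zero.1 (Nat.le_zero.1 hdeg)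
    subst h1e
    simp only [one_pow, mul_one] at heq
    have h2e : h2 = 1 := eq_one_of_pfree hp1 hh2 heq
    subst h2e
    simp only [one_pow, mul_one] at heq
    exact ⟨heq, rfl⟩
  | succ k ih =>
    intro b1 h1 b2 h2 hdeg hb1 hh1 hb2 hh2 hp1 hp2 heq
    by_cases h1e : h1 = 1
    · subst h1e
      simp only [one_pow, mul_one] at heq
      have h2e : h2 = 1 := eq_one_of_pfree hp1 hh2 heq
      subst h2e
      simp only [one_pow, mul_one] at heq
      exact ⟨heq, rfl⟩
    · have h1nu : ¬ IsUnit h1 := fun hu =>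
        h1e (hh1.natDegree_eq_zero.1 (natDegree_eq_zero_of_isUnit hu))
      obtain ⟨p, hpirr, hpd⟩ := WfDvdMonoid.exists_irreducible_factor h1nu hh1.ne_zero
      set q := mz p with hqdef
      have hassoc : Associated p q := mz_associated hpirr.ne_zero
      have hqm : q.Monic := mz_monic hpirr.ne_zero
      have hqirr : Irreducible q := hassoc.irreducible hpirr
      have hqprime : Prime q := hqirr.prime
      have hqh1 : q ∣ h1 := hassoc.symm.dvd.trans hpd
      have hqh2 : q ∣ h2 := by
        by_contra hqh2
        apply hp2 q hqirr
        have hd : q ^ (n+1) ∣ b2 * h2 ^ (n+1) := by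
          rw [← heq]
          exact Dvd.dvd.mul_left (pow_dvd_pow_of_dvd hqh1 _) b1
        exact hqprime.pow_dvd_of_dvd_mul_right _
          (fun hc => hqh2 (hqprime.dvd_of_dvd_pow hc)) hd
      obtain ⟨t1, ht1⟩ := hqh1
      obtain ⟨t2, ht2⟩ := hqh2
      have ht1m : t1.Monic := hqm.of_mul_monic_left (ht1 ▸ hh1)
      have ht2m : t2.Monic := hqm.of_mul_monic_left (ht2 ▸ hh2)
      have hqdeg : 0 < q.natDegree :=
        monic_natDegree_pos hqm (fun hx => hqirr.not_isUnit (hx ▸ isUnit_one))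
      have ht1deg : t1.natDegree ≤ k := by
        have := hqm.natDegree_mul ht1m
        rw [← ht1] at this
        omega
      have heq' : b1 * t1 ^ (n+1) = b2 * t2 ^ (n+1) := by
        have hqpow : q ^ (n+1) ≠ 0 := pow_ne_zero _ hqm.ne_zero
        apply mul_left_cancel₀ hqpow
        have e1 : q ^ (n+1) * (b1 * t1 ^ (n+1)) = b1 * h1 ^ (n+1) := by
          rw [ht1, mul_pow]; ring
        have e2 : q ^ (n+1) * (b2 * t2 ^ (n+1)) = b2 * h2 ^ (n+1) := by
          rw [ht2, mul_pow]; ring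
        rw [e1, e2, heq]
      obtain ⟨hb, ht⟩ := ih b1 t1 b2 t2 ht1deg hb1 ht1m hb2 ht2m hp1 hp2 heq'
      exact ⟨hb, by rw [ht1, ht2, ht]⟩

/-- The power-decomposition map is a bijection. -/
noncomputable def equivB (n d : ℕ) :
    (Σ e : Fin (d + 1), Mo F e × PF F n ((d - (e : ℕ)) * (n + 1))) ≃ Mo F (d * (n + 1)) := by
  refine Equiv.ofBijective (fun x => ⟨x.2.2.1 * x.2.1.1 ^ (n + 1), ?_, ?_⟩) ⟨?_, ?_⟩
  · exact x.2.2.2.1.mul (x.2.1.2.1.pow _)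
  · obtain ⟨e, ⟨h, hhm, hhe⟩, ⟨b, hbm, hbe, hbp⟩⟩ := x
    have he : (e : ℕ) ≤ d := by omega
    rw [hbm.natDegree_mul (hhm.pow _), natDegree_pow, hbe, hhe]
    have : (d - (e:ℕ)) * (n+1) + (e:ℕ) * (n+1) = d * (n+1) := by
      rw [← Nat.add_mul]
      congr 1
      omega
    rw [← this]
    ring
  · rintro ⟨e1, ⟨h1, hh1, he1⟩, ⟨b1, hb1, hbe1, hbp1⟩⟩ ⟨e2, ⟨h2, hh2, he2⟩, ⟨b2, hb2, hbe2, hbp2⟩⟩ h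
    have heq : b1 * h1 ^ (n+1) = b2 * h2 ^ (n+1) := congrArg Subtype.val h
    obtain ⟨hb, hh⟩ := decomp_unique n h1.natDegree b1 h1 b2 h2 le_rfl
      hb1 hh1 hb2 hh2 hbp1 hbp2 heq
    have he : e1 = e2 := Fin.ext (by rw [← he1, ← he2, hh])
    subst he hb hh
    rfl
  · rintro ⟨f, hfm, hfd⟩
    obtain ⟨b, h, hbm, hhm, hbp, hbh⟩ := exists_decomp n f.natDegree f le_rfl hfm
    have hdeg : b.natDegree + (n+1) * h.natDegree = (n+1) * d := by
      have h2 := hbm.natDegree_mul (hhm.pow (n+1))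
      rw [← hbh, natDegree_pow, hfd, mul_comm d (n+1)] at h2
      omega
    have he : h.natDegree ≤ d :=
      Nat.le_of_mul_le_mul_left
        (show (n+1) * h.natDegree ≤ (n+1) * d by omega) (Nat.succ_pos n)
    have hbdeg : b.natDegree = (d - h.natDegree) * (n+1) := by
      rw [Nat.sub_mul, mul_comm d (n+1), mul_comm h.natDegree (n+1)]
      omega
    refine ⟨⟨⟨h.natDegree, by omega⟩, ⟨h, hhm, rfl⟩, ⟨b, hbm, hbdeg, hbp⟩⟩, ?_⟩
    exact Subtype.ext hbh.symm

end PowSide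

section Count

variable [Fintype F]

lemma card_tuples (n d : ℕ) :
    Nat.card {f : Fin (n + 1) → F[X] // ∀ i, (f i).Monic ∧ (f i).natDegree = d}
      = Fintype.card F ^ (d * (n + 1)) := by
  have e : {f : Fin (n + 1) → F[X] // ∀ i, (f i).Monic ∧ (f i).natDegree = d}
      ≃ (Fin (n + 1) → Mo F d) :=
    { toFun := fun f i => ⟨f.1 i, f.2 i⟩
      invFun := fun g => ⟨fun i => (g i).1, fun i => (g i).2⟩
      left_inv := fun f => Subtype.ext rfl
      right_inv := fun g => funext fun i => Subtype.ext rfl }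
  rw [Nat.card_congr e, Nat.card_pi]
  simp only [card_Mo]
  rw [Finset.prod_const, Finset.card_univ, Fintype.card_fin, ← pow_mul]

lemma identityA (n d : ℕ) :
    ∑ e ∈ Finset.range (d + 1), Fintype.card F ^ e * Nat.card (Cop F n (d - e))
      = Fintype.card F ^ (d * (n + 1)) := by
  have h := Nat.card_congr (equivA (F := F) n d)
  rw [ncard_sigma (fun e : Fin (d+1) => Mo F e × Cop F n (d - (e : ℕ))), card_tuples] at h
  rw [← h, ← Fin.sum_univ_eq_sum_range
    (fun e => Fintype.card F ^ e * Nat.card (Cop F n (d - e))) (d + 1)]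
  apply Finset.sum_congr rfl
  intro i _
  rw [Nat.card_prod, card_Mo]

lemma identityB (n d : ℕ) :
    ∑ e ∈ Finset.range (d + 1),
        Fintype.card F ^ e * Nat.card (PF F n ((d - e) * (n + 1)))
      = Fintype.card F ^ (d * (n + 1)) := by
  have h := Nat.card_congr (equivB (F := F) n d)
  rw [ncard_sigma (fun e : Fin (d+1) => Mo F e × PF F n ((d - (e : ℕ)) * (n + 1))),
    card_Mo] at h
  rw [← h, ← Fin.sum_univ_eq_sum_range
    (fun e => Fintype.card F ^ e * Nat.card (PF F n ((d - e) * (n + 1)))) (d + 1)]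
  apply Finset.sum_congr rfl
  intro i _
  rw [Nat.card_prod, card_Mo]

lemma key (n : ℕ) : ∀ d : ℕ, Nat.card (Cop F n d) = Nat.card (PF F n (d * (n + 1))) := by
  intro d
  induction d using Nat.strong_induction_on with
  | _ d ih =>
    have hA := identityA (F := F) n d
    have hB := identityB (F := F) n d
    rw [Finset.sum_range_succ'] at hA hB
    simp only [pow_zero, one_mul, Nat.sub_zero] at hA hB
    have hsum : ∑ i ∈ Finset.range d,
        Fintype.card F ^ (i + 1) * Nat.card (Cop F n (d - (i + 1)))
        = ∑ i ∈ Finset.range d,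
        Fintype.card F ^ (i + 1) * Nat.card (PF F n ((d - (i + 1)) * (n + 1))) := by
      apply Finset.sum_congr rfl
      intro i hi
      have hlt : d - (i + 1) < d := by
        have := Finset.mem_range.1 hi
        omega
      rw [ih _ hlt]
    rw [hsum] at hA
    omega

end Count

section Bridge

lemma rm_pow {K : Type} [Field K] {p : K[X]} (hp : p ≠ 0) (α : K) (e : ℕ) :
    rootMultiplicity α (p ^ e) = e * rootMultiplicity α p := by
  induction e with
  | zero =>
    simp only [pow_zero, zero_mul]
    exact rootMultiplicity_eq_zero (by simp [IsRoot])
  | succ e ih =>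
    rw [pow_succ, rootMultiplicity_mul (mul_ne_zero (pow_ne_zero _ hp) hp), ih]
    ring

lemma extract_pow : ∀ (k : ℕ) (f : F[X]), f ≠ 0 → f.natDegree ≤ k →
    ∀ p : F[X], Irreducible p → ∃ (e : ℕ) (g : F[X]), f = p ^ e * g ∧ ¬ p ∣ g := by
  intro k
  induction k with
  | zero =>
    intro f hf0 hdeg p hpirr
    refine ⟨0, f, by simp, fun hdvd => ?_⟩
    have : IsUnit f := isUnit_iff_degree_eq_zero.2 (by
      rw [degree_eq_natDegree hf0, Nat.le_zero.1 hdeg]; rfl)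
    exact hpirr.not_isUnit (isUnit_of_dvd_unit hdvd this)
  | succ k ih =>
    intro f hf0 hdeg p hpirr
    by_cases hdvd : p ∣ f
    · obtain ⟨f', hf'⟩ := hdvd
      have hf'0 : f' ≠ 0 := fun h0 => hf0 (by rw [hf', h0, mul_zero])
      have hpd : 0 < p.natDegree := hpirr.natDegree_pos
      have hdeg' : f'.natDegree ≤ k := by
        have := natDegree_mul hpirr.ne_zero hf'0
        rw [← hf'] at this
        omega
      obtain ⟨e, g, hg, hgd⟩ := ih f' hf'0 hdeg' p hpirr
      exact ⟨e + 1, g, by rw [hf', hg, pow_succ]; ring, hgd⟩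
    · exact ⟨0, f, by simp, hdvd⟩

lemma bridgeA [Fintype F] {n : ℕ} (f : Fin (n + 1) → F[X]) (hf : ∀ i, (f i).Monic) :
    (∃ α : AlgebraicClosure F, ∀ i,
        (X - C α) ∣ (f i).map (algebraMap F (AlgebraicClosure F)))
      ↔ Finset.univ.gcd f ≠ 1 := by
  constructor
  · rintro ⟨α, hα⟩ hg1
    have hroot : ∀ i, aeval α (f i) = 0 := by
      intro i
      rw [aeval_def, ← eval_map]
      exact dvd_iff_isRoot.1 (hα i)
    have halg : IsAlgebraic F α := ⟨f 0, (hf 0).ne_zero, hroot 0⟩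
    have hint : IsIntegral F α := halg.isIntegral
    have hdvd : minpoly F α ∣ Finset.univ.gcd f :=
      Finset.dvd_gcd (fun i _ => minpoly.dvd F α (hroot i))
    rw [hg1] at hdvd
    exact (minpoly.irreducible hint).not_isUnit (isUnit_of_dvd_one hdvd)
  · intro hg1
    set g := Finset.univ.gcd f with hgdef
    have hgne : g ≠ 0 := fun h0 =>
      (hf 0).ne_zero (Finset.gcd_eq_zero_iff.1 h0 0 (Finset.mem_univ 0))
    have hgm : (mz g).Monic := mz_monic hgne
    have hgnu : ¬ IsUnit g := fun hu =>
      hg1 (by rw [hgdef, ← Finset.normalize_gcd]; exact normalize_eq_one.2 hu)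
    have hmznu : mz g ≠ 1 := fun h1 =>
      hgnu ((mz_associated hgne).symm.isUnit (h1 ▸ isUnit_one))
    have hdeg : 0 < (mz g).natDegree := monic_natDegree_pos hgm hmznu
    have hmapdeg : ((mz g).map (algebraMap F (AlgebraicClosure F))).degree ≠ 0 := by
      rw [degree_map]
      intro h0
      have h1 : (mz g).natDegree = 0 := natDegree_eq_zero_iff_degree_le_zero.2 (le_of_eq h0)
      omega
    obtain ⟨α, hα⟩ := IsAlgClosed.exists_root _ hmapdeg
    refine ⟨α, fun i => ?_⟩
    have hgdvd : mz g ∣ f i :=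
      (mz_associated hgne).symm.dvd.trans (Finset.gcd_dvd (Finset.mem_univ i))
    exact (dvd_iff_isRoot.2 hα).trans (Polynomial.map_dvd _ hgdvd)

lemma bridgeB [Fintype F] {n : ℕ} {f : F[X]} (hf : f.Monic) :
    (∃ α : AlgebraicClosure F,
        (X - C α) ^ (n + 1) ∣ f.map (algebraMap F (AlgebraicClosure F)))
      ↔ ∃ p : F[X], Irreducible p ∧ p ^ (n + 1) ∣ f := by
  constructor
  · rintro ⟨α, hα⟩
    have hfne : f ≠ 0 := hf.ne_zero
    have hmapne : f.map (algebraMap F (AlgebraicClosure F)) ≠ 0 := (hf.map _).ne_zero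
    have hroot : aeval α f = 0 := by
      rw [aeval_def, ← eval_map]
      exact dvd_iff_isRoot.1 ((dvd_pow_self _ (Nat.succ_ne_zero n)).trans hα)
    have halg : IsAlgebraic F α := ⟨f, hfne, hroot⟩
    have hint : IsIntegral F α := halg.isIntegral
    have hpirr := minpoly.irreducible hint
    refine ⟨minpoly F α, hpirr, ?_⟩
    obtain ⟨e, g, hfe, hgnd⟩ := extract_pow f.natDegree f hfne le_rfl _ hpirr
    suffices hen : n + 1 ≤ e by
      rw [hfe]
      exact Dvd.dvd.mul_right (pow_dvd_pow _ hen) g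
    have hg0 : g ≠ 0 := fun h0 => hfne (by rw [hfe, h0, mul_zero])
    have hp0 : minpoly F α ≠ 0 := hpirr.ne_zero
    have hpK0 : (minpoly F α).map (algebraMap F (AlgebraicClosure F)) ≠ 0 := by
      rwa [Ne, Polynomial.map_eq_zero]
    have hgK0 : g.map (algebraMap F (AlgebraicClosure F)) ≠ 0 := by
      rwa [Ne, Polynomial.map_eq_zero]
    have hfK : f.map (algebraMap F (AlgebraicClosure F)) = ((minpoly F α).map (algebraMap F (AlgebraicClosure F))) ^ e * g.map (algebraMap F (AlgebraicClosure F)) := by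
      rw [hfe, Polynomial.map_mul, Polynomial.map_pow]
    have hn1 : n + 1 ≤ rootMultiplicity α (f.map (algebraMap F (AlgebraicClosure F))) :=
      (le_rootMultiplicity_iff hmapne).2 hα
    have hsep : (minpoly F α).Separable := PerfectField.separable_of_irreducible hpirr
    have hsf : Squarefree ((minpoly F α).map (algebraMap F (AlgebraicClosure F))) := (hsep.map).squarefree
    have hrmp : rootMultiplicity α ((minpoly F α).map (algebraMap F (AlgebraicClosure F))) ≤ 1 := by
      by_contra hgt
      push_neg at hgt
      have h2 : (X - C α) ^ 2 ∣ (minpoly F α).map (algebraMap F (AlgebraicClosure F)) :=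
        (le_rootMultiplicity_iff hpK0).1 hgt
      rw [sq] at h2
      exact (not_isUnit_X_sub_C α) (hsf _ h2)
    have hrmg : rootMultiplicity α (g.map (algebraMap F (AlgebraicClosure F))) = 0 := by
      apply rootMultiplicity_eq_zero
      intro hr
      apply hgnd
      apply minpoly.dvd F α
      rw [aeval_def, ← eval_map]
      exact hr
    have hcalc : rootMultiplicity α (f.map (algebraMap F (AlgebraicClosure F)))
        = e * rootMultiplicity α ((minpoly F α).map (algebraMap F (AlgebraicClosure F))) := by
      rw [hfK, rootMultiplicity_mul (by rw [← hfK]; exact hmapne), rm_pow hpK0, hrmg, add_zero]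
    have : n + 1 ≤ e * rootMultiplicity α ((minpoly F α).map (algebraMap F (AlgebraicClosure F))) := hcalc ▸ hn1
    calc n + 1 ≤ e * rootMultiplicity α ((minpoly F α).map (algebraMap F (AlgebraicClosure F))) := this
      _ ≤ e * 1 := Nat.mul_le_mul_left e hrmp
      _ = e := mul_one e
  · rintro ⟨p, hpirr, hpd⟩
    have hdeg : ((p.map (algebraMap F (AlgebraicClosure F)))).degree ≠ 0 := by
      rw [degree_map]
      intro h0
      have h1 : p.natDegree = 0 := natDegree_eq_zero_iff_degree_le_zero.2 (le_of_eq h0)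
      have h2 := hpirr.natDegree_pos
      omega
    obtain ⟨α, hα⟩ := IsAlgClosed.exists_root _ hdeg
    refine ⟨α, ?_⟩
    calc (X - C α) ^ (n + 1) ∣ (p.map (algebraMap F (AlgebraicClosure F))) ^ (n + 1) :=
        pow_dvd_pow_of_dvd (dvd_iff_isRoot.2 hα) _
      _ = (p ^ (n + 1)).map (algebraMap F (AlgebraicClosure F)) := by
        rw [Polynomial.map_pow]
      _ ∣ f.map (algebraMap F (AlgebraicClosure F)) := Polynomial.map_dvd _ hpd

end Bridge

end Stmt6Aux

theorem stmt_6 (F : Type) [Field F] [Fintype F] (d n : ℕ) (hn : 1 ≤ n) (hd : n + 1 ≤ d) :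
    Nat.card {f : Fin (n + 1) → Polynomial F //
      (∀ i, (f i).Monic ∧ (f i).natDegree = d) ∧
      ¬ ∃ α : AlgebraicClosure F, ∀ i,
        (X - C α) ∣ (f i).map (algebraMap F (AlgebraicClosure F))} =
    Nat.card {f : Polynomial F // f.Monic ∧ f.natDegree = d * (n + 1) ∧
      ¬ ∃ α : AlgebraicClosure F,
        (X - C α) ^ (n + 1) ∣ f.map (algebraMap F (AlgebraicClosure F))} := by
  have hL : Nat.card {f : Fin (n + 1) → Polynomial F //
      (∀ i, (f i).Monic ∧ (f i).natDegree = d) ∧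
      ¬ ∃ α : AlgebraicClosure F, ∀ i,
        (X - C α) ∣ (f i).map (algebraMap F (AlgebraicClosure F))}
      = Nat.card (Stmt6Aux.Cop F n d) := by
    apply Nat.card_congr
    apply Equiv.subtypeEquivRight
    intro f
    constructor
    · rintro ⟨h1, h2⟩
      exact ⟨h1, not_not.1 (fun hne =>
        h2 ((Stmt6Aux.bridgeA f fun i => (h1 i).1).2 hne))⟩
    · rintro ⟨h1, h2⟩
      exact ⟨h1, fun hex => (Stmt6Aux.bridgeA f fun i => (h1 i).1).1 hex h2⟩
  have hR : Nat.card {f : Polynomial F // f.Monic ∧ f.natDegree = d * (n + 1) ∧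
      ¬ ∃ α : AlgebraicClosure F,
        (X - C α) ^ (n + 1) ∣ f.map (algebraMap F (AlgebraicClosure F))}
      = Nat.card (Stmt6Aux.PF F n (d * (n + 1))) := by
    apply Nat.card_congr
    apply Equiv.subtypeEquivRight
    intro f
    constructor
    · rintro ⟨h1, h2, h3⟩
      exact ⟨h1, h2, fun p hp hdvd => h3 ((Stmt6Aux.bridgeB h1).2 ⟨p, hp, hdvd⟩)⟩
    · rintro ⟨h1, h2, h3⟩
      refine ⟨h1, h2, fun hex => ?_⟩
      obtain ⟨p, hp, hdvd⟩ := (Stmt6Aux.bridgeB h1).1 hex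
      exact h3 p hp hdvd
  rw [hL, hR, Stmt6Aux.key n d]
end

section
/- For d ≥ n ≥ 1 and m ≥ 1 and a finite field F_q, the number of m-tuples of monic degree-d polynomials (f_1,...,f_m) over F_q for which there exists a monic h ∈ F_q[z] with deg h ≥ 1 and h^n dividing every f_i equals q^{(d−n)m+1}. -/
open Polynomial

set_option linter.unusedSectionVars false

namespace Stmt17Aux

variable {F : Type} [Field F] [Fintype F]

/-- No common `n`-th power factor of positive degree. -/
def NoPow (n : ℕ) {m : ℕ} (f : Fin m → Polynomial F) : Prop :=
  ∀ h : Polynomial F, h.Monic → 1 ≤ h.natDegree → ¬ ∀ i, h ^ n ∣ f i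

lemma exists_decomp {n m : ℕ} (hn : 1 ≤ n) (hm : 0 < m) :
    ∀ e : ℕ, ∀ f : Fin m → Polynomial F,
      (∀ i, (f i).Monic ∧ (f i).natDegree = e) →
      ∃ h : Polynomial F, ∃ g : Fin m → Polynomial F,
        h.Monic ∧ (∀ i, f i = h ^ n * g i) ∧ NoPow n g := by
  intro e
  induction e using Nat.strong_induction_on with
  | _ e IH =>
    intro f hf
    by_cases hQ : NoPow n f
    · exact ⟨1, f, monic_one, fun i => by simp, hQ⟩
    · unfold NoPow at hQ
      push_neg at hQ
      obtain ⟨p, hpm, hpd, hpdvd⟩ := hQ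
      choose g' hg' using hpdvd
      have hpn : (p ^ n).Monic := hpm.pow n
      have hg'm : ∀ i, (g' i).Monic := fun i =>
        hpn.of_mul_monic_left (by rw [← hg' i]; exact (hf i).1)
      have hdeg : ∀ i, (g' i).natDegree = e - n * p.natDegree := by
        intro i
        have h1 : (f i).natDegree = n * p.natDegree + (g' i).natDegree := by
          rw [hg' i, natDegree_mul (pow_ne_zero n hpm.ne_zero) (hg'm i).ne_zero,
            natDegree_pow]
        have := (hf i).2
        omega
      have hle : n * p.natDegree + (g' (⟨0, hm⟩ : Fin m)).natDegree = e := by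
        have h1 : (f ⟨0, hm⟩).natDegree = n * p.natDegree + (g' ⟨0, hm⟩).natDegree := by
          rw [hg' ⟨0, hm⟩, natDegree_mul (pow_ne_zero n hpm.ne_zero)
            (hg'm ⟨0, hm⟩).ne_zero, natDegree_pow]
        rw [← h1, (hf ⟨0, hm⟩).2]
      have hlt : e - n * p.natDegree < e := by
        have : 1 ≤ n * p.natDegree := Nat.one_le_iff_ne_zero.mpr (by positivity)
        omega
      obtain ⟨h', g, hh'm, heq, hQ'⟩ := IH _ hlt g' (fun i => ⟨hg'm i, hdeg i⟩)
      refine ⟨p * h', g, hpm.mul hh'm, fun i => ?_, hQ'⟩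
      rw [hg' i, heq i, mul_pow, mul_assoc]

lemma isUnit_of_pow_dvd {n m : ℕ} {a : Polynomial F} (ha : a ≠ 0)
    {g : Fin m → Polynomial F} (hQ : NoPow n g) (hdvd : ∀ i, a ^ n ∣ g i) :
    IsUnit a := by
  by_contra hu
  set a' : Polynomial F := a * C a.leadingCoeff⁻¹ with ha'
  have hm' : a'.Monic := monic_mul_leadingCoeff_inv ha
  have hdg : 1 ≤ a'.natDegree := by
    rcases Nat.eq_zero_or_pos a'.natDegree with h0 | h1
    · exact absurd (IsUnit.of_mul_eq_one _ (hm'.natDegree_eq_zero.mp h0)) hu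
    · exact h1
  have hdiv : a' ∣ a := by
    refine ⟨C a.leadingCoeff, ?_⟩
    rw [ha', mul_assoc, ← C_mul, inv_mul_cancel₀ (leadingCoeff_ne_zero.mpr ha), C_1, mul_one]
  exact hQ a' hm' hdg fun i => dvd_trans (pow_dvd_pow_of_dvd hdiv n) (hdvd i)


lemma decomp_uniq {n m : ℕ} {h₁ h₂ : Polynomial F} {g₁ g₂ : Fin m → Polynomial F}
    (hh₁ : h₁.Monic) (hh₂ : h₂.Monic) (hQ₁ : NoPow n g₁) (hQ₂ : NoPow n g₂)
    (heq : ∀ i, h₁ ^ n * g₁ i = h₂ ^ n * g₂ i) : h₁ = h₂ ∧ g₁ = g₂ := by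
  classical
  set dd : Polynomial F := GCDMonoid.gcd h₁ h₂ with hdd
  have hd0 : dd ≠ 0 := gcd_ne_zero_of_left hh₁.ne_zero
  set a : Polynomial F := h₁ / dd with haa
  set b : Polynomial F := h₂ / dd with hbb
  have hea : dd * a = h₁ := EuclideanDomain.mul_div_cancel' hd0 (gcd_dvd_left _ _)
  have heb : dd * b = h₂ := EuclideanDomain.mul_div_cancel' hd0 (gcd_dvd_right _ _)
  have hco : IsCoprime a b := isCoprime_div_gcd_div_gcd hh₂.ne_zero
  have key : ∀ i, a ^ n * g₁ i = b ^ n * g₂ i := by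
    intro i
    have h1 : dd ^ n * (a ^ n * g₁ i) = dd ^ n * (b ^ n * g₂ i) := by
      rw [← mul_assoc, ← mul_assoc, ← mul_pow, ← mul_pow, hea, heb]
      exact heq i
    exact mul_left_cancel₀ (pow_ne_zero n hd0) h1
  have ha0 : a ≠ 0 := fun h => hh₁.ne_zero (by rw [← hea, h, mul_zero])
  have hb0 : b ≠ 0 := fun h => hh₂.ne_zero (by rw [← heb, h, mul_zero])
  have hau : IsUnit a := by
    refine isUnit_of_pow_dvd ha0 hQ₂ fun i => ?_
    exact (hco.pow (n := n) (m := n)).dvd_of_dvd_mul_left ⟨g₁ i, (key i).symm⟩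
  have hbu : IsUnit b := by
    refine isUnit_of_pow_dvd hb0 hQ₁ fun i => ?_
    exact (hco.pow (n := n) (m := n)).symm.dvd_of_dvd_mul_left ⟨g₂ i, key i⟩
  have hass : Associated h₁ h₂ :=
    (hea ▸ associated_mul_unit_right dd a hau).symm.trans
      (heb ▸ associated_mul_unit_right dd b hbu)
  have hh : h₁ = h₂ := eq_of_monic_of_associated hh₁ hh₂ hass
  refine ⟨hh, funext fun i => ?_⟩
  have := heq i
  rw [hh] at this
  exact mul_left_cancel₀ (pow_ne_zero n hh₂.ne_zero) this


lemma not_noPow_iff {n m : ℕ} {f : Fin m → Polynomial F} :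
    ¬ NoPow n f ↔ ∃ h : Polynomial F, h.Monic ∧ 1 ≤ h.natDegree ∧ ∀ i, h ^ n ∣ f i := by
  unfold NoPow; push_neg; rfl

def Mo (F : Type) [Field F] (e : ℕ) : Type := {p : Polynomial F // p.Monic ∧ p.natDegree = e}

def Tup (F : Type) [Field F] (m e : ℕ) : Type :=
  {f : Fin m → Polynomial F // ∀ i, (f i).Monic ∧ (f i).natDegree = e}

def TQ (F : Type) [Field F] (n m e : ℕ) : Type :=
  {f : Fin m → Polynomial F // (∀ i, (f i).Monic ∧ (f i).natDegree = e) ∧ NoPow n f}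

noncomputable def moEquiv (e : ℕ) : Mo F e ≃ (Fin e → F) :=
  (monicEquivDegreeLT e).trans (degreeLTEquiv F e).toEquiv

instance (e : ℕ) : Finite (Mo F e) := Finite.of_equiv _ (moEquiv (F := F) e).symm

def tupEquiv (m e : ℕ) : Tup F m e ≃ (Fin m → Mo F e) where
  toFun f := fun i => ⟨f.1 i, f.2 i⟩
  invFun g := ⟨fun i => (g i).1, fun i => (g i).2⟩
  left_inv f := rfl
  right_inv g := rfl

instance (m e : ℕ) : Finite (Tup F m e) := Finite.of_equiv _ (tupEquiv (F := F) m e).symm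

def tqEquiv (n m e : ℕ) : TQ F n m e ≃ {x : Tup F m e // NoPow n x.1} where
  toFun f := ⟨⟨f.1, f.2.1⟩, f.2.2⟩
  invFun x := ⟨x.1.1, x.1.2, x.2⟩
  left_inv f := rfl
  right_inv x := rfl

instance (n m e : ℕ) : Finite (TQ F n m e) :=
  Finite.of_equiv _ (tqEquiv (F := F) n m e).symm

lemma card_Mo (e : ℕ) : Nat.card (Mo F e) = Fintype.card F ^ e := by
  rw [Nat.card_congr (moEquiv (F := F) e), Nat.card_fun, Nat.card_eq_fintype_card,
    Nat.card_eq_fintype_card, Fintype.card_fin]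

lemma card_Tup (m e : ℕ) : Nat.card (Tup F m e) = Fintype.card F ^ (e * m) := by
  rw [Nat.card_congr (tupEquiv (F := F) m e), Nat.card_fun, card_Mo,
    Nat.card_eq_fintype_card, Fintype.card_fin, ← pow_mul]

lemma nat_card_sigma {ι : Type} [Fintype ι] (β : ι → Type) [∀ i, Finite (β i)] :
    Nat.card (Σ i, β i) = ∑ i, Nat.card (β i) := by
  letI := fun i => Fintype.ofFinite (β i)
  simp [Nat.card_eq_fintype_card]

lemma key {n m : ℕ} (hn : 1 ≤ n) (hm : 0 < m) (e : ℕ) :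
    ∑ k ∈ Finset.range (e / n + 1),
      Fintype.card F ^ k * Nat.card (TQ F n m (e - n * k)) =
    Fintype.card F ^ (e * m) := by
  classical
  let Φ : (Σ k : Fin (e / n + 1), Mo F (k : ℕ) × TQ F n m (e - n * (k : ℕ))) → Tup F m e :=
    fun x => ⟨fun i => x.2.1.1 ^ n * x.2.2.1 i, by
      intro i
      have hk : (x.1 : ℕ) ≤ e / n := Nat.lt_succ_iff.mp x.1.isLt
      have hnk : n * (x.1 : ℕ) ≤ e :=
        le_trans (Nat.mul_le_mul_left n hk) (Nat.mul_div_le e n)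
      have hgm := (x.2.2.2.1 i).1
      have hgd := (x.2.2.2.1 i).2
      have hhm := x.2.1.2.1
      have hhd := x.2.1.2.2
      refine ⟨(hhm.pow n).mul hgm, ?_⟩
      rw [natDegree_mul (pow_ne_zero n hhm.ne_zero) hgm.ne_zero, natDegree_pow, hhd, hgd]
      omega⟩
  have hinj : Function.Injective Φ := by
    rintro ⟨⟨k, hk⟩, ⟨h, hhm, hhd⟩, ⟨g, hg, hQ⟩⟩ ⟨⟨k', hk'⟩, ⟨h', hhm', hhd'⟩, ⟨g', hg', hQ'⟩⟩ hxy
    have heq : ∀ i, h ^ n * g i = h' ^ n * g' i := fun i =>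
      congrFun (congrArg Subtype.val hxy) i
    obtain ⟨rfl, hgg⟩ := decomp_uniq hhm hhm' hQ hQ' heq
    obtain rfl : k = k' := hhd.symm.trans hhd' 
    subst hgg
    rfl
  have hsurj : Function.Surjective Φ := by
    rintro ⟨f, hf⟩
    obtain ⟨h, g, hhm, heqf, hQ⟩ := exists_decomp hn hm e f hf
    have hgm : ∀ i, (g i).Monic := fun i =>
      (hhm.pow n).of_mul_monic_left (by rw [← heqf i]; exact (hf i).1)
    have hgd : ∀ i, n * h.natDegree + (g i).natDegree = e := by
      intro i
      rw [← (hf i).2, heqf i, natDegree_mul (pow_ne_zero n hhm.ne_zero) (hgm i).ne_zero,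
        natDegree_pow]
    have hnk : n * h.natDegree ≤ e := by have := hgd ⟨0, hm⟩; omega
    have hk : h.natDegree < e / n + 1 :=
      Nat.lt_succ_of_le ((Nat.le_div_iff_mul_le (by omega)).mpr
        (by rw [Nat.mul_comm]; exact hnk))
    refine ⟨⟨⟨h.natDegree, hk⟩, ⟨h, hhm, rfl⟩, ⟨g, fun i => ⟨hgm i, by
      show (g i).natDegree = e - n * h.natDegree
      have := hgd i; omega⟩, hQ⟩⟩, ?_⟩
    exact Subtype.ext (funext fun i => (heqf i).symm)
  symm
  calc Fintype.card F ^ (e * m) = Nat.card (Tup F m e) := (card_Tup m e).symm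
    _ = Nat.card (Σ k : Fin (e / n + 1), Mo F (k : ℕ) × TQ F n m (e - n * (k : ℕ))) :=
        (Nat.card_eq_of_bijective Φ ⟨hinj, hsurj⟩).symm
    _ = ∑ k : Fin (e / n + 1), Nat.card (Mo F (k : ℕ) × TQ F n m (e - n * (k : ℕ))) :=
        nat_card_sigma _
    _ = ∑ k : Fin (e / n + 1),
          Fintype.card F ^ (k : ℕ) * Nat.card (TQ F n m (e - n * (k : ℕ))) := by
        simp [Nat.card_prod, card_Mo]
    _ = _ := Fin.sum_univ_eq_sum_range
          (fun i => Fintype.card F ^ i * Nat.card (TQ F n m (e - n * i))) (e / n + 1)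

end Stmt17Aux

open Stmt17Aux in
theorem stmt_17 (F : Type) [Field F] [Fintype F] (q d n m : ℕ)
    (hq : Fintype.card F = q) (hn : 1 ≤ n) (hd : n ≤ d) (hm : 1 ≤ m) :
    Nat.card {f : Fin m → Polynomial F //
      (∀ i, (f i).Monic ∧ (f i).natDegree = d) ∧
      ∃ h : Polynomial F, h.Monic ∧ 1 ≤ h.natDegree ∧ ∀ i, h ^ n ∣ f i} =
    q ^ ((d - n) * m + 1) := by
  classical
  subst hq
  have e2 : {x : Tup F m d // ¬ NoPow n x.1} ≃ {f : Fin m → Polynomial F //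
      (∀ i, (f i).Monic ∧ (f i).natDegree = d) ∧
      ∃ h : Polynomial F, h.Monic ∧ 1 ≤ h.natDegree ∧ ∀ i, h ^ n ∣ f i} :=
    { toFun := fun x => ⟨x.1.1, x.1.2, not_noPow_iff.mp x.2⟩
      invFun := fun y => ⟨⟨y.1, y.2.1⟩, not_noPow_iff.mpr y.2.2⟩
      left_inv := fun x => rfl
      right_inv := fun y => rfl }
  have e1 : Nat.card (Tup F m d) =
      Nat.card (TQ F n m d) + Nat.card {f : Fin m → Polynomial F //
        (∀ i, (f i).Monic ∧ (f i).natDegree = d) ∧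
        ∃ h : Polynomial F, h.Monic ∧ 1 ≤ h.natDegree ∧ ∀ i, h ^ n ∣ f i} := by
    rw [Nat.card_congr (Equiv.sumCompl fun x : Tup F m d => NoPow n x.1).symm,
      Nat.card_sum, Nat.card_congr (tqEquiv (F := F) n m d), Nat.card_congr e2]
  have k1 := key (F := F) (n := n) (m := m) hn hm d
  have k2 := key (F := F) (n := n) (m := m) hn hm (d - n)
  have hdn : d = (d - n) + n := by clear e1 e2 k1 k2; omega
  have hn0 : 0 < n := hn
  have hdiv : d / n = (d - n) / n + 1 := by
    conv_lhs => rw [hdn]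
    rw [Nat.add_div_right _ hn0]
  rw [hdiv, Finset.sum_range_succ'] at k1
  have hre : ∀ i, Fintype.card F ^ (i + 1) * Nat.card (TQ F n m (d - n * (i + 1)))
      = Fintype.card F * (Fintype.card F ^ i * Nat.card (TQ F n m ((d - n) - n * i))) := by
    intro i
    rw [show d - n * (i + 1) = (d - n) - n * i by
      clear e1 e2 k1 k2; rw [Nat.mul_succ]; omega, pow_succ]
    ring
  rw [Finset.sum_congr rfl (fun i _ => hre i), ← Finset.mul_sum, k2] at k1
  simp only [pow_zero, one_mul, Nat.mul_zero, Nat.sub_zero] at k1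
  rw [card_Tup] at e1
  have h3 : Nat.card (TQ F n m d) + Nat.card {f : Fin m → Polynomial F //
        (∀ i, (f i).Monic ∧ (f i).natDegree = d) ∧
        ∃ h : Polynomial F, h.Monic ∧ 1 ≤ h.natDegree ∧ ∀ i, h ^ n ∣ f i} =
      Nat.card (TQ F n m d) +
        Fintype.card F * Fintype.card F ^ ((d - n) * m) := by
    rw [← e1, ← k1, Nat.add_comm]
  rw [pow_succ, Nat.mul_comm (Fintype.card F ^ ((d - n) * m)) (Fintype.card F)]
  exact Nat.add_left_cancel h3
end

section
/- For a finite field F_q and integers d ≥ n ≥ 1, m ≥ 1, k with 0 ≤ k ≤ ⌊d/n⌋, the set of m-tuples (f_1,...,f_m) of monic degree-d polynomials over F_q such that the maximal degree of a monic h with h^n | f_i for all i is exactly k is in bijection with Poly_n^{d−kn,m}(F_q) × F_q^k, via (f_1,...,f_m) ↦ ((f_1/h^n, ..., f_m/h^n), coefficients of h) where h is the maximal common n-th-power-root factor. -/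
open Polynomial

variable {F : Type} [Field F]

noncomputable def hp18 (k : ℕ) (c : Fin k → F) : Polynomial F :=
  X ^ k + ∑ j : Fin k, C (c j) * X ^ (j : ℕ)

lemma hp18_sum_deg (k : ℕ) (c : Fin k → F) :
    (∑ j : Fin k, C (c j) * X ^ (j : ℕ)).degree < ((k : ℕ) : WithBot ℕ) := by
  refine lt_of_le_of_lt (degree_sum_le _ _) ?_
  rw [Finset.sup_lt_iff (by exact_mod_cast WithBot.bot_lt_coe k)]
  intro j _
  exact lt_of_le_of_lt (degree_C_mul_X_pow_le _ _) (by exact_mod_cast j.isLt)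

lemma hp18_monic (k : ℕ) (c : Fin k → F) : (hp18 k c).Monic :=
  monic_X_pow_add (hp18_sum_deg k c)

lemma hp18_natDegree (k : ℕ) (c : Fin k → F) : (hp18 k c).natDegree = k := by
  have : (hp18 k c).degree = (k : ℕ) := by
    rw [hp18, degree_add_eq_left_of_degree_lt (by rw [degree_X_pow]; exact hp18_sum_deg k c),
      degree_X_pow]
  exact natDegree_eq_of_degree_eq_some this

lemma hp18_coeff (k : ℕ) (c : Fin k → F) (j : Fin k) : (hp18 k c).coeff j = c j := by
  classical
  rw [hp18, coeff_add, coeff_X_pow, if_neg (by omega : ¬ ((j : ℕ) = k)), finset_sum_coeff]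
  rw [Finset.sum_eq_single j]
  · simp
  · intro b _ hb
    rw [coeff_C_mul, coeff_X_pow, if_neg (by simpa [Fin.val_eq_val] using hb.symm), mul_zero]
  · simp

lemma hp18_eq {k : ℕ} {h : Polynomial F} (hm : h.Monic) (hk : h.natDegree = k) :
    hp18 k (fun j => h.coeff j) = h := by
  classical
  ext i
  rcases lt_trichotomy i k with hi | hi | hi
  · rw [hp18_coeff k _ ⟨i, hi⟩]
  · subst hi
    rw [hp18, coeff_add, coeff_X_pow, if_pos rfl, finset_sum_coeff]
    rw [Finset.sum_eq_zero, add_zero]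
    · exact (hk ▸ hm.coeff_natDegree).symm
    · intro b _
      rw [coeff_C_mul, coeff_X_pow, if_neg (by omega), mul_zero]
  · rw [coeff_eq_zero_of_natDegree_lt (by omega : h.natDegree < i)]
    rw [hp18, coeff_add, coeff_X_pow, if_neg (by omega), finset_sum_coeff,
      Finset.sum_eq_zero, add_zero]
    intro b _
    rw [coeff_C_mul, coeff_X_pow, if_neg (by omega), mul_zero]

lemma rm_pow18 {R : Type*} [CommRing R] [IsDomain R] {p : R[X]} (hp : p ≠ 0) (α : R) (n : ℕ) :
    rootMultiplicity α (p ^ n) = n * rootMultiplicity α p := by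
  induction n with
  | zero => simp [rootMultiplicity_eq_zero (by simp [IsRoot] : ¬ IsRoot (1 : R[X]) α)]
  | succ n ih =>
    rw [pow_succ, rootMultiplicity_mul (mul_ne_zero (pow_ne_zero n hp) hp), ih]
    ring

lemma dvd_of_rm18 {K : Type*} [Field K] [IsAlgClosed K] {a b : K[X]} (ha : a.Monic) (hb : b.Monic)
    (hle : ∀ α : K, rootMultiplicity α a ≤ rootMultiplicity α b) : a ∣ b := by
  classical
  have h1 : a = (a.roots.map fun α => X - C α).prod :=
    (IsAlgClosed.splits a).eq_prod_roots_of_monic ha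
  have h2 : b = (b.roots.map fun α => X - C α).prod :=
    (IsAlgClosed.splits b).eq_prod_roots_of_monic hb
  have hroots : a.roots ≤ b.roots := by
    rw [Multiset.le_iff_count]
    intro α
    rw [count_roots, count_roots]
    exact hle α
  calc a = (a.roots.map fun α => X - C α).prod := h1
    _ ∣ (b.roots.map fun α => X - C α).prod :=
      Multiset.prod_dvd_prod_of_le (Multiset.map_le_map hroots)
    _ = b := h2.symm

lemma pow_minpoly_dvd18 {F : Type} [Field F] [PerfectField F] {K : Type} [Field K] [Algebra F K]
    [Algebra.IsAlgebraic F K] (α : K) (n : ℕ) :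
    ∀ g : Polynomial F, g ≠ 0 → (X - C α) ^ n ∣ g.map (algebraMap F K) →
      (minpoly F α) ^ n ∣ g := by
  have hint : IsIntegral F α := (Algebra.IsAlgebraic.isAlgebraic (R := F) α).isIntegral
  have hp0 : minpoly F α ≠ 0 := minpoly.ne_zero hint
  have hmp0 : (minpoly F α).map (algebraMap F K) ≠ 0 := Polynomial.map_ne_zero hp0
  have hsep : (minpoly F α).Separable :=
    PerfectField.separable_of_irreducible (minpoly.irreducible hint)
  have hsq : Squarefree ((minpoly F α).map (algebraMap F K)) := (hsep.map).squarefree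
  have hrm1 : rootMultiplicity α ((minpoly F α).map (algebraMap F K)) = 1 := by
    have hle : rootMultiplicity α ((minpoly F α).map (algebraMap F K)) ≤ 1 := by
      by_contra hcon
      push_neg at hcon
      have : (X - C α) ^ 2 ∣ (minpoly F α).map (algebraMap F K) :=
        (le_rootMultiplicity_iff hmp0).1 (by omega)
      exact not_isUnit_X_sub_C α (hsq _ (by rw [← sq]; exact this))
    have hge : 0 < rootMultiplicity α ((minpoly F α).map (algebraMap F K)) := by
      rw [rootMultiplicity_pos hmp0]
      show eval α _ = 0
      rw [eval_map, ← aeval_def, minpoly.aeval]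
    omega
  induction n with
  | zero => intro g _ _; simpa using one_dvd g
  | succ n ih =>
    intro g hg hdvd
    have hroot : minpoly F α ∣ g := by
      apply minpoly.dvd
      rw [aeval_def, ← eval_map]
      rw [show (eval α (map (algebraMap F K) g) = 0) ↔ IsRoot (map (algebraMap F K) g) α from Iff.rfl, ← dvd_iff_isRoot]
      exact (dvd_pow_self _ (Nat.succ_ne_zero n)).trans hdvd
    obtain ⟨g₂, hg₂⟩ := hroot
    have hg₂0 : g₂ ≠ 0 := by rintro rfl; simp at hg₂; exact hg hg₂
    have hmg : g.map (algebraMap F K) ≠ 0 := Polynomial.map_ne_zero hg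
    have hmg₂ : g₂.map (algebraMap F K) ≠ 0 := Polynomial.map_ne_zero hg₂0
    have hle : n + 1 ≤ rootMultiplicity α (g.map (algebraMap F K)) :=
      (le_rootMultiplicity_iff hmg).2 hdvd
    rw [hg₂, Polynomial.map_mul, rootMultiplicity_mul (mul_ne_zero hmp0 hmg₂), hrm1] at hle
    have hdvd₂ : (X - C α) ^ n ∣ g₂.map (algebraMap F K) :=
      (le_rootMultiplicity_iff hmg₂).1 (by omega)
    rw [hg₂, pow_succ']
    exact mul_dvd_mul_left _ (ih g₂ hg₂0 hdvd₂)

section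
variable {F : Type} [Field F]

local notation "K" => AlgebraicClosure F
local notation "ι" => algebraMap F (AlgebraicClosure F)

-- Lemma C
lemma key_dvd18 {m n : ℕ} (hn : 1 ≤ n) {f g : Fin m → Polynomial F} {h : Polynomial F}
    (hh : h.Monic) (hg0 : ∀ i, g i ≠ 0) (hf : ∀ i, f i = g i * h ^ n)
    (hno : ¬ ∃ α : K, ∀ i, (X - C α) ^ n ∣ (g i).map ι)
    {h' : Polynomial F} (hh' : h'.Monic) (hdvd : ∀ i, h' ^ n ∣ f i) : h' ∣ h := by
  push_neg at hno
  have hrm : ∀ α : K, rootMultiplicity α (h'.map ι) ≤ rootMultiplicity α (h.map ι) := by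
    intro α
    by_contra hlt
    push_neg at hlt
    obtain ⟨i, hi⟩ := hno α
    apply hi
    have hm0 : h.map ι ≠ 0 := Polynomial.map_ne_zero hh.ne_zero
    have hm0' : h'.map ι ≠ 0 := Polynomial.map_ne_zero hh'.ne_zero
    have hg0' : (g i).map ι ≠ 0 := Polynomial.map_ne_zero (hg0 i)
    have hfi0 : (f i).map ι ≠ 0 := by
      rw [hf i, Polynomial.map_mul, Polynomial.map_pow]
      exact mul_ne_zero hg0' (pow_ne_zero _ hm0)
    have hd1 : (X - C α) ^ (n * rootMultiplicity α (h'.map ι)) ∣ (f i).map ι := by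
      rw [mul_comm, pow_mul]
      exact (pow_dvd_pow_of_dvd (pow_rootMultiplicity_dvd _ α) n).trans
        (by rw [← Polynomial.map_pow]; exact Polynomial.map_dvd _ (hdvd i))
    have hle1 : n * rootMultiplicity α (h'.map ι) ≤ rootMultiplicity α ((f i).map ι) :=
      (le_rootMultiplicity_iff hfi0).2 hd1
    have hne : (g i).map ι * (h.map ι) ^ n ≠ 0 := mul_ne_zero hg0' (pow_ne_zero _ hm0)
    rw [hf i, Polynomial.map_mul, Polynomial.map_pow, rootMultiplicity_mul hne,
      rm_pow18 hm0] at hle1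
    have hstep : n * (rootMultiplicity α (h.map ι) + 1) ≤ n * rootMultiplicity α (h'.map ι) :=
      Nat.mul_le_mul_left _ hlt
    rw [Nat.mul_add, Nat.mul_one] at hstep
    have : n ≤ rootMultiplicity α ((g i).map ι) := by omega
    exact (le_rootMultiplicity_iff hg0').1 this
  have : h'.map ι ∣ h.map ι := dvd_of_rm18 (hh'.map ι) (hh.map ι) hrm
  exact (map_dvd_map' ι).1 this

-- Lemma D
lemma no_common18 [PerfectField F] {m n k : ℕ} (hn : 1 ≤ n) {f g : Fin m → Polynomial F}
    {h : Polynomial F} (hh : h.Monic) (hhk : h.natDegree = k) (hg0 : ∀ i, g i ≠ 0)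
    (hf : ∀ i, f i = g i * h ^ n)
    (hmax : ∀ h' : Polynomial F, h'.Monic → (∀ i, h' ^ n ∣ f i) → h'.natDegree ≤ k) :
    ¬ ∃ α : K, ∀ i, (X - C α) ^ n ∣ (g i).map ι := by
  rintro ⟨α, hα⟩
  have hint : IsIntegral F α := (Algebra.IsAlgebraic.isAlgebraic (R := F) α).isIntegral
  have hpn : ∀ i, (minpoly F α) ^ n ∣ g i := fun i => pow_minpoly_dvd18 α n (g i) (hg0 i) (hα i)
  have hdvd : ∀ i, (h * minpoly F α) ^ n ∣ f i := by
    intro i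
    rw [hf i, mul_pow, mul_comm (g i)]
    exact mul_dvd_mul dvd_rfl (hpn i)
  have hmono : (h * minpoly F α).Monic := hh.mul (minpoly.monic hint)
  have hle := hmax _ hmono hdvd
  rw [natDegree_mul hh.ne_zero (minpoly.ne_zero hint), hhk] at hle
  have := minpoly.natDegree_pos hint
  omega

-- uniqueness
lemma h_eq18 {m n k : ℕ} (hn : 1 ≤ n) {f g : Fin m → Polynomial F} {h h' : Polynomial F}
    (hh : h.Monic) (hhk : h.natDegree = k) (hg0 : ∀ i, g i ≠ 0) (hf : ∀ i, f i = g i * h ^ n)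
    (hno : ¬ ∃ α : K, ∀ i, (X - C α) ^ n ∣ (g i).map ι)
    (hh' : h'.Monic) (hh'k : h'.natDegree = k) (hdvd : ∀ i, h' ^ n ∣ f i) : h' = h := by
  obtain ⟨u, hu⟩ := key_dvd18 hn hh hg0 hf hno hh' hdvd
  have hum : u.Monic := hh'.of_mul_monic_left (hu ▸ hh)
  have : h.natDegree = h'.natDegree + u.natDegree := by
    rw [hu, natDegree_mul hh'.ne_zero hum.ne_zero]
  have hu0 : u.natDegree = 0 := by omega
  rw [hu, hum.natDegree_eq_zero.1 hu0, mul_one]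
end

section
variable {F : Type} [Field F]
local notation "K" => AlgebraicClosure F
local notation "ι" => algebraMap F (AlgebraicClosure F)

lemma toFun_mem18 [PerfectField F] {m n k d : ℕ} (hn : 1 ≤ n) {f : Fin m → Polynomial F}
    {h : Polynomial F} (hfm : ∀ i, (f i).Monic ∧ (f i).natDegree = d)
    (hh : h.Monic) (hhk : h.natDegree = k) (hdvd : ∀ i, h ^ n ∣ f i)
    (hmax : ∀ h' : Polynomial F, h'.Monic → (∀ i, h' ^ n ∣ f i) → h'.natDegree ≤ k) :
    (∀ i, (f i /ₘ h ^ n).Monic ∧ (f i /ₘ h ^ n).natDegree = d - k * n) ∧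
      ¬ ∃ α : K, ∀ i, (X - C α) ^ n ∣ (f i /ₘ h ^ n).map ι := by
  have hq : ∀ i, h ^ n * (f i /ₘ h ^ n) = f i := by
    intro i
    obtain ⟨q, hqe⟩ := hdvd i
    rw [hqe, mul_divByMonic_cancel_left _ (hh.pow n)]
  have hgm : ∀ i, (f i /ₘ h ^ n).Monic := fun i =>
    (hh.pow n).of_mul_monic_left (by rw [hq i]; exact (hfm i).1)
  have hgd : ∀ i, (f i /ₘ h ^ n).natDegree = d - k * n := by
    intro i
    have hdeg := (hfm i).2
    rw [← hq i, natDegree_mul (pow_ne_zero _ hh.ne_zero) (hgm i).ne_zero, natDegree_pow,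
      hhk] at hdeg
    have hc : n * k = k * n := Nat.mul_comm n k
    omega
  exact ⟨fun i => ⟨hgm i, hgd i⟩,
    no_common18 hn hh hhk (fun i => (hgm i).ne_zero)
      (fun i => by rw [mul_comm]; exact (hq i).symm) hmax⟩

lemma invFun_mem18 {m n k d : ℕ} (hn : 1 ≤ n) (hkn : k * n ≤ d) {g : Fin m → Polynomial F}
    (hgm : ∀ i, (g i).Monic ∧ (g i).natDegree = d - k * n)
    (hno : ¬ ∃ α : K, ∀ i, (X - C α) ^ n ∣ (g i).map ι) (c : Fin k → F) :
    (∀ i, (g i * hp18 k c ^ n).Monic ∧ (g i * hp18 k c ^ n).natDegree = d) ∧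
      ∃ h : Polynomial F, h.Monic ∧ h.natDegree = k ∧ (∀ i, h ^ n ∣ g i * hp18 k c ^ n) ∧
        ∀ h' : Polynomial F, h'.Monic → (∀ i, h' ^ n ∣ g i * hp18 k c ^ n) →
          h'.natDegree ≤ k := by
  have hpm := hp18_monic k c
  refine ⟨fun i => ⟨(hgm i).1.mul (hpm.pow n), ?_⟩,
    hp18 k c, hpm, hp18_natDegree k c, fun i => Dvd.intro_left _ rfl, ?_⟩
  · rw [natDegree_mul (hgm i).1.ne_zero (pow_ne_zero _ hpm.ne_zero), natDegree_pow,
      hp18_natDegree, (hgm i).2]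
    have hc : n * k = k * n := Nat.mul_comm n k
    omega
  · intro h' hh' hdvd
    have hd := key_dvd18 hn hpm (fun i => (hgm i).1.ne_zero) (fun _ => rfl) hno hh' hdvd
    exact (natDegree_le_of_dvd hd hpm.ne_zero).trans_eq (hp18_natDegree k c)

end

theorem stmt_18 (F : Type) [Field F] [Fintype F] (q d n m k : ℕ)
    (hq : Fintype.card F = q) (hn : 1 ≤ n) (hd : n ≤ d) (hm : 1 ≤ m) (hk : k ≤ d / n) :
    ∃ e : {f : Fin m → Polynomial F //
        (∀ i, (f i).Monic ∧ (f i).natDegree = d) ∧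
        ∃ h : Polynomial F, h.Monic ∧ h.natDegree = k ∧ (∀ i, h ^ n ∣ f i) ∧
          ∀ h' : Polynomial F, h'.Monic → (∀ i, h' ^ n ∣ f i) → h'.natDegree ≤ k} ≃
      {g : Fin m → Polynomial F //
        (∀ i, (g i).Monic ∧ (g i).natDegree = d - k * n) ∧
        ¬ ∃ α : AlgebraicClosure F, ∀ i,
          (X - C α) ^ n ∣ (g i).map (algebraMap F (AlgebraicClosure F))} × (Fin k → F),
      ∀ f (h : Polynomial F), h.Monic → h.natDegree = k → (∀ i, h ^ n ∣ f.1 i) →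
        (∀ i, ((e f).1.1 i) * h ^ n = f.1 i) ∧ ∀ j : Fin k, (e f).2 j = h.coeff j := by
  classical
  have hkn : k * n ≤ d := (Nat.le_div_iff_mul_le (by omega : 0 < n)).1 hk
  refine ⟨⟨fun f => (⟨fun i => f.1 i /ₘ f.2.2.choose ^ n,
      toFun_mem18 hn f.2.1 f.2.2.choose_spec.1 f.2.2.choose_spec.2.1 f.2.2.choose_spec.2.2.1
        f.2.2.choose_spec.2.2.2⟩, fun j => f.2.2.choose.coeff j),
    fun gc => ⟨fun i => gc.1.1 i * hp18 k gc.2 ^ n,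
      invFun_mem18 hn hkn gc.1.2.1 gc.1.2.2 gc.2⟩, ?_, ?_⟩, ?_⟩
  · -- left inverse
    intro f
    obtain ⟨hh, hhk, hdvd, hmax⟩ := f.2.2.choose_spec
    apply Subtype.ext
    funext i
    show (f.1 i /ₘ f.2.2.choose ^ n) * hp18 k (fun j => f.2.2.choose.coeff j) ^ n = f.1 i
    rw [hp18_eq hh hhk]
    obtain ⟨q, hqe⟩ := hdvd i
    rw [hqe, mul_divByMonic_cancel_left _ (hh.pow n)]
    exact mul_comm _ _
  · -- right inverse
    rintro ⟨⟨g, hgm, hgno⟩, c⟩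
    have hex : ∃ h : Polynomial F, h.Monic ∧ h.natDegree = k ∧
        (∀ i, h ^ n ∣ g i * hp18 k c ^ n) ∧
        ∀ h' : Polynomial F, h'.Monic → (∀ i, h' ^ n ∣ g i * hp18 k c ^ n) →
          h'.natDegree ≤ k :=
      (invFun_mem18 hn hkn hgm hgno c).2
    obtain ⟨hHm, hHk, hHdvd, hHmax⟩ := hex.choose_spec
    have hHeq : hex.choose = hp18 k c :=
      h_eq18 hn (hp18_monic k c) (hp18_natDegree k c) (fun i => (hgm i).1.ne_zero)
        (fun _ => rfl) hgno hHm hHk hHdvd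
    refine Prod.ext ?_ ?_
    · apply Subtype.ext
      funext i
      show (g i * hp18 k c ^ n) /ₘ hex.choose ^ n = g i
      rw [hHeq, mul_comm, mul_divByMonic_cancel_left _ ((hp18_monic k c).pow n)]
    · funext j
      show hex.choose.coeff j = c j
      rw [hHeq]
      exact hp18_coeff k c j
  · -- the spec
    intro f h hhm hhk hdvd
    obtain ⟨hHm, hHk, hHdvd, hmax⟩ := f.2.2.choose_spec
    have hno := (toFun_mem18 hn f.2.1 hHm hHk hHdvd hmax).2
    have hqq : ∀ i, f.2.2.choose ^ n * (f.1 i /ₘ f.2.2.choose ^ n) = f.1 i := by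
      intro i
      obtain ⟨q, hqe⟩ := hHdvd i
      rw [hqe, mul_divByMonic_cancel_left _ (hHm.pow n)]
    have heq : h = f.2.2.choose :=
      h_eq18 hn hHm hHk
        (fun i => ((hHm.pow n).of_mul_monic_left
          (by rw [hqq i]; exact (f.2.1 i).1)).ne_zero)
        (fun i => by rw [mul_comm]; exact (hqq i).symm) hno hhm hhk hdvd
    constructor
    · intro i
      show (f.1 i /ₘ f.2.2.choose ^ n) * h ^ n = f.1 i
      rw [heq, mul_comm]
      exact hqq i
    · intro j
      show f.2.2.choose.coeff j = h.coeff j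
      rw [heq]
end
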